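/- Let n ≥ 4. For every illegal ranking w of n contestants, there exists a finite sequence of illegal rankings of n contestants, beginning with w and ending with the constant ranking whose every entry is 2, in which every consecutive pair of words overlaps. -/

import Mathlib

/-- Two words `w, w'` of length `n` overlap if the last `n−1` letters of `w` equal the
first `n−1` letters of `w'`. -/
def Overlap {n k : ℕ} (w w' : Fin n → Fin k) : Prop :=
  ∀ i j : Fin n, (j : ℕ) = (i : ℕ) + 1 → w j = w' i

/-- A ranking `r : Fin n → Fin n` (value `i` represents rank `i+1`) is legal if the rank
of each contestant equals 1 plus the number of contestants with strictly smaller rank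
(0-indexed: `r i = #{j | r j < r i}`). -/
def LegalRanking {n : ℕ} (r : Fin n → Fin n) : Prop :=
  ∀ i : Fin n, (r i : ℕ) = (Finset.univ.filter (fun j : Fin n => r j < r i)).card

namespace IllegalAux

lemma one_lt_of_four_le {n : ℕ} (hn : 4 ≤ n) : 1 < n := by omega

/-- shift the word left by one and append `a` as last letter. -/
def shift {n : ℕ} (v : Fin n → Fin n) (a : Fin n) : Fin n → Fin n :=
  fun i => if h : (i : ℕ) + 1 < n then v ⟨(i : ℕ) + 1, h⟩ else a

lemma overlap_shift {n : ℕ} (v : Fin n → Fin n) (a : Fin n) : Overlap v (shift v a) := by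
  intro i j hj
  have h : (i : ℕ) + 1 < n := hj ▸ j.isLt
  simp only [shift]
  rw [dif_pos h]
  exact congrArg v (Fin.ext hj)

lemma shift_last {n : ℕ} (hn : 1 ≤ n) (v : Fin n → Fin n) (a : Fin n) :
    shift v a ⟨n - 1, by omega⟩ = a := by
  simp only [shift]
  rw [dif_neg (by omega)]

lemma shift_ne_last {n : ℕ} (v : Fin n → Fin n) (a b : Fin n) (i : Fin n)
    (hi : (i : ℕ) ≠ n - 1) : shift v a i = shift v b i := by
  have h : (i : ℕ) + 1 < n := by
    have h1 : (i : ℕ) < n := i.isLt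
    omega
  simp only [shift]
  rw [dif_pos h, dif_pos h]

/-- a word with no zero entry is illegal. -/
lemma noZero_illegal {n : ℕ} (hn : 1 ≤ n) (r : Fin n → Fin n) (h : ∀ i, (r i : ℕ) ≠ 0) :
    ¬ LegalRanking r := by
  intro hL
  obtain ⟨i, -, hi⟩ := Finset.exists_min_image Finset.univ r
    ⟨⟨0, by omega⟩, Finset.mem_univ _⟩
  have h1 := hL i
  have hempty : (Finset.univ.filter (fun j : Fin n => r j < r i)) = ∅ := by
    apply Finset.eq_empty_iff_forall_notMem.2
    intro j hj
    rw [Finset.mem_filter] at hj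
    exact absurd hj.2 (not_lt.2 (hi j (Finset.mem_univ j)))
  rw [hempty] at h1
  simp only [Finset.card_empty] at h1
  exact h i h1

/-- The key lemma: some nonzero letter keeps the shifted word illegal. -/
lemma key {n : ℕ} (hn : 4 ≤ n) (v : Fin n → Fin n) :
    ∃ a : Fin n, (a : ℕ) ≠ 0 ∧ ¬ LegalRanking (shift v a) := by
  by_contra hcon
  push_neg at hcon
  set last : Fin n := ⟨n - 1, by omega⟩ with hlastdef
  set o1 : Fin n := ⟨1, by omega⟩ with ho1
  set o2 : Fin n := ⟨2, by omega⟩ with ho2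
  have hne1 : (o1 : ℕ) ≠ 0 := by simp [ho1]
  have hne2 : (o2 : ℕ) ≠ 0 := by simp [ho2]
  have hneM : (last : ℕ) ≠ 0 := by simp only [hlastdef]; omega
  have L1 := hcon o1 hne1
  have L2 := hcon o2 hne2
  have LM := hcon last hneM
  -- step A : the big filter for the last entry of `shift v last` is everything but `last`
  have hWMlast : shift v last last = last := shift_last (by omega) v last
  have hA : (Finset.univ.filter (fun j : Fin n => shift v last j < shift v last last))
      = Finset.univ.erase last := by
    apply Finset.eq_of_subset_of_card_le
    · intro j hj
      rw [Finset.mem_filter] at hj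
      refine Finset.mem_erase.2 ⟨?_, Finset.mem_univ j⟩
      intro hjl
      rw [hjl] at hj
      exact lt_irrefl _ hj.2
    · have hcard : (Finset.univ.erase last).card = n - 1 := by
        rw [Finset.card_erase_of_mem (Finset.mem_univ _), Finset.card_univ, Fintype.card_fin]
      rw [hcard, ← LM last]
      rw [hWMlast]
  have hsm : ∀ j : Fin n, j ≠ last → shift v last j < last := by
    intro j hj
    have : j ∈ Finset.univ.filter (fun j : Fin n => shift v last j < shift v last last) := by
      rw [hA]; exact Finset.mem_erase.2 ⟨hj, Finset.mem_univ j⟩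
    rw [Finset.mem_filter, hWMlast] at this
    exact this.2
  -- step B : every non-last entry has value ≤ 1
  have hB : ∀ i : Fin n, i ≠ last → (shift v last i : ℕ) ≤ 1 := by
    intro i hi
    by_contra hgt
    push_neg at hgt
    have heqi : shift v o1 i = shift v last i := shift_ne_last v o1 last i (fun h => hi (Fin.ext h))
    have hM := LM i
    have h1 := L1 i
    rw [heqi] at h1
    have hins : (Finset.univ.filter (fun j : Fin n => shift v o1 j < shift v last i))
        = insert last (Finset.univ.filter (fun j : Fin n => shift v last j < shift v last i)) := by
      ext j
      simp only [Finset.mem_filter, Finset.mem_insert, Finset.mem_univ, true_and]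
      by_cases hjl : j = last
      · subst hjl
        simp only [true_or, iff_true]
        rw [shift_last (by omega) v o1]
        rw [Fin.lt_def]
        exact hgt
      · rw [shift_ne_last v o1 last j (fun h => hjl (Fin.ext h))]
        constructor
        · intro h; exact Or.inr h
        · rintro (h | h)
          · exact absurd h hjl
          · exact h
    have hnotmem : last ∉ Finset.univ.filter (fun j : Fin n => shift v last j < shift v last i) := by
      rw [Finset.mem_filter]
      rintro ⟨-, hlt⟩
      rw [hWMlast] at hlt
      exact absurd (hsm i hi) (not_lt.2 (le_of_lt hlt))
    rw [hins, Finset.card_insert_of_notMem hnotmem, ← hM] at h1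
    omega
  -- step C : contradiction from the last entry of `shift v o2`
  have hW2last : shift v o2 last = o2 := shift_last (by omega) v o2
  have hC : (Finset.univ.filter (fun j : Fin n => shift v o2 j < shift v o2 last))
      = Finset.univ.erase last := by
    ext j
    simp only [Finset.mem_filter, Finset.mem_univ, true_and, Finset.mem_erase, and_true]
    rw [hW2last]
    constructor
    · intro h
      intro hjl
      rw [hjl, hW2last] at h
      exact lt_irrefl _ h
    · intro hjl
      rw [shift_ne_last v o2 last j (fun h => hjl (Fin.ext h)), Fin.lt_def]
      have := hB j hjl
      simp only [ho2]
      omega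
  have h2 := L2 last
  rw [hC, hW2last, Finset.card_erase_of_mem (Finset.mem_univ _), Finset.card_univ,
    Fintype.card_fin] at h2
  simp only [ho2] at h2
  omega

open Classical in
/-- pick the next letter to append : `1` if the word already has no zeros,
otherwise a letter given by the key lemma. -/
noncomputable def pick {n : ℕ} (hn : 4 ≤ n) (v : Fin n → Fin n) : Fin n :=
  if ∀ i, (v i : ℕ) ≠ 0 then ⟨1, one_lt_of_four_le hn⟩ else Classical.choose (key hn v)

lemma pick_ne {n : ℕ} (hn : 4 ≤ n) (v : Fin n → Fin n) : (pick hn v : ℕ) ≠ 0 := by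
  unfold pick
  split
  · simp
  · exact (Classical.choose_spec (key hn v)).1

lemma pick_illegal {n : ℕ} (hn : 4 ≤ n) (v : Fin n → Fin n) :
    ¬ LegalRanking (shift v (pick hn v)) := by
  unfold pick
  split
  · next h =>
    apply noZero_illegal (by omega)
    intro i
    simp only [shift]
    split
    · exact h _
    · simp
  · exact (Classical.choose_spec (key hn v)).2

lemma pick_of_noZero {n : ℕ} (hn : 4 ≤ n) (v : Fin n → Fin n) (h : ∀ i, (v i : ℕ) ≠ 0) :
    pick hn v = ⟨1, one_lt_of_four_le hn⟩ := by
  unfold pick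
  rw [if_pos h]

/-- the sequence of words obtained by repeatedly shifting in picked letters. -/
noncomputable def seqG {n : ℕ} (hn : 4 ≤ n) (w : Fin n → Fin n) : ℕ → Fin n → Fin n
  | 0 => w
  | t + 1 => shift (seqG hn w t) (pick hn (seqG hn w t))

lemma seqG_nonzero {n : ℕ} (hn : 4 ≤ n) (w : Fin n → Fin n) :
    ∀ t : ℕ, ∀ i : Fin n, n ≤ t + (i : ℕ) → (seqG hn w t i : ℕ) ≠ 0 := by
  intro t
  induction t with
  | zero =>
    intro i hi
    exact absurd hi (by have := i.isLt; omega)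
  | succ t ih =>
    intro i hi
    simp only [seqG, shift]
    split
    · next h => exact ih ⟨(i : ℕ) + 1, h⟩ (by simp; omega)
    · exact pick_ne hn _

lemma seqG_ones {n : ℕ} (hn : 4 ≤ n) (w : Fin n → Fin n) :
    ∀ t : ℕ, ∀ i : Fin n, 2 * n ≤ t + (i : ℕ) → seqG hn w t i = ⟨1, one_lt_of_four_le hn⟩ := by
  intro t
  induction t with
  | zero =>
    intro i hi
    exact absurd hi (by have := i.isLt; omega)
  | succ t ih =>
    intro i hi
    simp only [seqG, shift]
    split
    · next h => exact ih ⟨(i : ℕ) + 1, h⟩ (by simp; omega)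
    · next h =>
      have hival : (i : ℕ) = n - 1 := by have := i.isLt; omega
      have htn : n ≤ t := by omega
      exact pick_of_noZero hn _ (fun j => seqG_nonzero hn w t j (by omega))

lemma seqG_illegal {n : ℕ} (hn : 4 ≤ n) (w : Fin n → Fin n) (hw : ¬ LegalRanking w) :
    ∀ t : ℕ, ¬ LegalRanking (seqG hn w t) := by
  intro t
  cases t with
  | zero => exact hw
  | succ t => exact pick_illegal hn _

end IllegalAux

/-- For `n ≥ 4`, every illegal ranking of `n` contestants is joined to the constant
ranking `22…2` (0-indexed value `1`) by a finite sequence of illegal rankings in which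
consecutive words overlap. -/
theorem illegal_rankings_connected_to_all_twos (n : ℕ) (hn : 4 ≤ n)
    (w : Fin n → Fin n) (hw : ¬ LegalRanking w) :
    ∃ (m : ℕ) (f : Fin (m + 1) → Fin n → Fin n),
      f 0 = w ∧ f (Fin.last m) = (fun _ => (⟨1, by omega⟩ : Fin n)) ∧
      (∀ i, ¬ LegalRanking (f i)) ∧
      (∀ i : Fin m, Overlap (f i.castSucc) (f i.succ)) := by
  refine ⟨2 * n, fun t => IllegalAux.seqG hn w (t : ℕ), ?_, ?_, ?_, ?_⟩
  · show IllegalAux.seqG hn w ((0 : Fin (2 * n + 1)) : ℕ) = w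
    have h0 : ((0 : Fin (2 * n + 1)) : ℕ) = 0 := rfl
    rw [h0]
    rfl
  · funext i
    show IllegalAux.seqG hn w ((Fin.last (2 * n)) : ℕ) i = _
    have hlast : ((Fin.last (2 * n)) : ℕ) = 2 * n := rfl
    rw [hlast]
    exact IllegalAux.seqG_ones hn w (2 * n) i (by omega)
  · intro i
    exact IllegalAux.seqG_illegal hn w hw (i : ℕ)
  · intro i
    show Overlap (IllegalAux.seqG hn w ((i.castSucc : Fin (2 * n + 1)) : ℕ))
      (IllegalAux.seqG hn w ((i.succ : Fin (2 * n + 1)) : ℕ))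
    have hc : ((i.castSucc : Fin (2 * n + 1)) : ℕ) = (i : ℕ) := rfl
    have hs : ((i.succ : Fin (2 * n + 1)) : ℕ) = (i : ℕ) + 1 := rfl
    rw [hc, hs]
    exact IllegalAux.overlap_shift _ _
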